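/- For r > 0 with r ≠ 1, the function β(x,y) = −2+4r²−2r⁴+2x²+2r²x²+2y²+2r²y²−2x²y² is strictly positive on the open square |r−1| < x < r+1, |r−1| < y < r+1. -/
import Mathlib


/-- For `r > 0` with `r ≠ 1`, the coefficient
`β(x,y) = -2 + 4r² - 2r⁴ + 2x² + 2r²x² + 2y² + 2r²y² - 2x²y²`
is strictly positive on the open square `|r-1| < x < r+1`, `|r-1| < y < r+1`. -/
theorem beta_pos_on_open_square
    (r x y : ℝ) (hr : 0 < r) (hr1 : r ≠ 1)
    (hx1 : |r - 1| < x) (hx2 : x < r + 1)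
    (hy1 : |r - 1| < y) (hy2 : y < r + 1) :
    0 < -2 + 4*r^2 - 2*r^4 + 2*x^2 + 2*r^2*x^2 + 2*y^2 + 2*r^2*y^2 - 2*x^2*y^2 := by
  have hx0 : 0 ≤ x := le_of_lt (lt_of_le_of_lt (abs_nonneg _) hx1)
  have hy0 : 0 ≤ y := le_of_lt (lt_of_le_of_lt (abs_nonneg _) hy1)
  have hx1' : (r - 1)^2 < x^2 := by
    have := sq_abs (r - 1)
    nlinarith [abs_nonneg (r - 1)]
  have hy1' : (r - 1)^2 < y^2 := by
    have := sq_abs (r - 1)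
    nlinarith [abs_nonneg (r - 1)]
  have hx2' : x^2 < (r + 1)^2 := by nlinarith
  have hy2' : y^2 < (r + 1)^2 := by nlinarith
  -- so |1 + r² - x²| < 2r and similarly for y
  have hu1 : 1 + r^2 - x^2 < 2*r := by nlinarith
  have hu2 : -(2*r) < 1 + r^2 - x^2 := by nlinarith
  have hv1 : 1 + r^2 - y^2 < 2*r := by nlinarith
  have hv2 : -(2*r) < 1 + r^2 - y^2 := by nlinarith
  nlinarith [mul_pos (by linarith : (0:ℝ) < 2*r - (1 + r^2 - x^2)) (by linarith : (0:ℝ) < 2*r + (1 + r^2 - y^2)),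
    mul_pos (by linarith : (0:ℝ) < 2*r + (1 + r^2 - x^2)) (by linarith : (0:ℝ) < 2*r - (1 + r^2 - y^2))]
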